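/- For any matrix A ∈ R^{n×d} with columns a_i, and for any column index i with a_i ≠ 0, the rank-1 matrix a_i a_i^T satisfies (1/ℓ_i)·a_i a_i^T ⪯ AA^T, where ℓ_i = a_i^T (AA^T)^+ a_i is the leverage score of column i. -/

import Mathlib

open Matrix

/-- `P` is the Moore–Penrose pseudoinverse of `M` (the four Penrose conditions). -/
def IsMoorePenrose {n : ℕ} (M P : Matrix (Fin n) (Fin n) ℝ) : Prop :=
  M * P * M = M ∧ P * M * P = P ∧ (M * P)ᵀ = M * P ∧ (P * M)ᵀ = P * M

/-- For any `A ∈ ℝ^{n×d}` with a nonzero column `aᵢ`, we have `(1/ℓᵢ)·aᵢaᵢᵀ ⪯ AAᵀ` in the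
Loewner order, where `ℓᵢ = aᵢᵀ(AAᵀ)⁺aᵢ` is the leverage score of column `i`. -/
theorem outer_div_leverage_le_gram {n d : ℕ} (A : Matrix (Fin n) (Fin d) ℝ)
    (i : Fin d) (hne : Aᵀ i ≠ 0)
    (P : Matrix (Fin n) (Fin n) ℝ) (hP : IsMoorePenrose (A * Aᵀ) P) :
    (A * Aᵀ - (1 / ((Aᵀ i) ⬝ᵥ (P *ᵥ (Aᵀ i)))) •
        Matrix.vecMulVec (Aᵀ i) (Aᵀ i)).PosSemidef := by
  obtain ⟨h1, h2, h3, h4⟩ := hP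
  set M : Matrix (Fin n) (Fin n) ℝ := A * Aᵀ with hM
  set a : Fin n → ℝ := Aᵀ i with ha
  have hMsymm : Mᵀ = M := by rw [hM, transpose_mul, transpose_transpose]
  have hMpsd : M.PosSemidef := by
    have := posSemidef_self_mul_conjTranspose A
    rwa [conjTranspose_eq_transpose_of_trivial] at this
  -- M * (M * P) = M
  have hMQ : M * (M * P) = M := by
    have h := congrArg transpose h1
    rw [transpose_mul, h3, hMsymm] at h
    exact h
  -- projection property : M * P * A = A
  have hQA : M * P * A = A := by
    have e1 : (A - M * P * A)ᵀ = Aᵀ - Aᵀ * (M * P) := by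
      rw [transpose_sub, transpose_mul, h3]
    have e2 : A * (Aᵀ * (M * P)) = M := by rw [← Matrix.mul_assoc, ← hM, hMQ]
    have e3 : M * P * A * Aᵀ = M := by rw [Matrix.mul_assoc (M * P) A Aᵀ, ← hM, h1]
    have e4 : M * P * A * (Aᵀ * (M * P)) = M := by
      rw [← Matrix.mul_assoc, e3, hMQ]
    have h0 : (A - M * P * A) * (A - M * P * A)ᴴ = 0 := by
      rw [conjTranspose_eq_transpose_of_trivial, e1, Matrix.sub_mul, Matrix.mul_sub,
        Matrix.mul_sub, e2, e3, e4, ← hM]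
      simp
    have := Matrix.self_mul_conjTranspose_eq_zero.mp h0
    have := sub_eq_zero.mp this
    exact this.symm
  -- column version
  have hcol : ∀ B : Matrix (Fin n) (Fin n) ℝ, B *ᵥ a = (B * A)ᵀ i := by
    intro B
    funext j
    simp [mulVec, mul_apply, dotProduct, ha]
  have hMPa : M *ᵥ (P *ᵥ a) = a := by
    rw [mulVec_mulVec, hcol (M * P), hQA]
  set y : Fin n → ℝ := P *ᵥ a with hy
  set ℓ : ℝ := a ⬝ᵥ y with hℓ
  have hyMy : y ⬝ᵥ M *ᵥ y = ℓ := by rw [hMPa, hℓ, dotProduct_comm]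
  have hℓ0 : 0 ≤ ℓ := by
    have := hMpsd.dotProduct_mulVec_nonneg y
    rwa [star_trivial, hyMy] at this
  have hℓpos : 0 < ℓ := by
    rcases hℓ0.lt_or_eq with h | h
    · exact h
    · exfalso
      have hz : star y ⬝ᵥ M *ᵥ y = 0 := by rw [star_trivial, hyMy, ← h]
      have := (hMpsd.dotProduct_mulVec_zero_iff y).mp hz
      rw [hMPa] at this
      exact hne this
  refine posSemidef_iff_dotProduct_mulVec.mpr ⟨?_, ?_⟩
  · -- Hermitian
    rw [IsHermitian, conjTranspose_eq_transpose_of_trivial, transpose_sub, transpose_smul,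
      hMsymm]
    congr 1
    ext j k
    simp [vecMulVec_apply, mul_comm]
  · intro x
    rw [star_trivial]
    have hquad : x ⬝ᵥ (M - (1 / ℓ) • vecMulVec a a) *ᵥ x
        = x ⬝ᵥ M *ᵥ x - (1 / ℓ) * ((a ⬝ᵥ x) * (a ⬝ᵥ x)) := by
      rw [Matrix.sub_mulVec, dotProduct_sub, smul_mulVec, dotProduct_smul]
      congr 1
      have : vecMulVec a a *ᵥ x = (a ⬝ᵥ x) • a := by
        funext j
        simp only [mulVec, vecMulVec_apply, dotProduct, Pi.smul_apply, smul_eq_mul]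
        rw [Finset.sum_mul]
        exact Finset.sum_congr rfl fun k _ => by ring
      rw [this, dotProduct_smul, smul_eq_mul, smul_eq_mul, dotProduct_comm x a]
    rw [hquad]
    set s : ℝ := x ⬝ᵥ M *ᵥ x with hs
    set c : ℝ := a ⬝ᵥ x with hc
    -- Cauchy–Schwarz via the point z = x - (c/ℓ) • y
    have hxMy : x ⬝ᵥ M *ᵥ y = c := by rw [hMPa, hc, dotProduct_comm]
    have hyMx : y ⬝ᵥ M *ᵥ x = c := by
      rw [dotProduct_mulVec, ← hMsymm, vecMul_transpose, hMPa, hc]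
    have hz := hMpsd.dotProduct_mulVec_nonneg (x - (c / ℓ) • y)
    rw [star_trivial, Matrix.mulVec_sub, dotProduct_sub, sub_dotProduct, sub_dotProduct,
      Matrix.mulVec_smul, dotProduct_smul, smul_dotProduct, smul_dotProduct,
      dotProduct_smul, hxMy, hyMx, hyMy, ← hs] at hz
    simp only [smul_eq_mul] at hz
    have hcℓ : c / ℓ * ℓ = c := div_mul_cancel₀ c (ne_of_gt hℓpos)
    rw [hcℓ] at hz
    have : 1 / ℓ * (c * c) = c / ℓ * c := by field_simp
    nlinarith [hz, hℓpos]
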